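/- Let s ≥ 3 and N ≥ 1. Suppose φ : Σ_s → ℝ^N is bounded by some R > 0 and exponentially locally determined. If for some ξ ∈ Σ_s the rotation vector ρ_φ(ξ) = lim_{n→∞} (1/n) Σ_{i=0}^{n−1} φ(σ^i ξ) exists, then for every ε > 0 there exists a periodic sequence η ∈ Σ_s such that ‖ρ_φ(ξ) − ρ_φ(η)‖ < ε. In particular, the set of rotation vectors of periodic sequences is dense in the pointwise rotation set J_φ. -/

import Mathlib

open Filter Topology

/-- The symbol space `Σ_s`: bi-infinite admissible sequences over an alphabet with
`s` symbols (represented by `Fin s`), i.e. `ξ_i ≠ ξ_{i+1}` for all `i ∈ ℤ`. -/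
def SymbSpace (s : ℕ) : Type := {ξ : ℤ → Fin s // ∀ i : ℤ, ξ i ≠ ξ (i + 1)}

/-- The (left) shift map `σ : Σ_s → Σ_s`, `(σξ)_i = ξ_{i+1}`. -/
def shift {s : ℕ} (ξ : SymbSpace s) : SymbSpace s :=
  ⟨fun i => ξ.1 (i + 1), fun i => ξ.2 (i + 1)⟩

/-- Birkhoff average `A_n(ξ) = (1/n) ∑_{i=0}^{n-1} φ(σ^i ξ)`. -/
noncomputable def birk {s N : ℕ} (φ : SymbSpace s → EuclideanSpace ℝ (Fin N))
    (n : ℕ) (ξ : SymbSpace s) : EuclideanSpace ℝ (Fin N) :=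
  (n : ℝ)⁻¹ • ∑ i ∈ Finset.range n, φ (shift^[i] ξ)

/-- `ρ` is the rotation vector `ρ_φ(ξ)`, i.e. the limit of the Birkhoff averages exists
and equals `ρ`. -/
def HasRotVec {s N : ℕ} (φ : SymbSpace s → EuclideanSpace ℝ (Fin N))
    (ξ : SymbSpace s) (ρ : EuclideanSpace ℝ (Fin N)) : Prop :=
  Tendsto (fun n => birk φ n ξ) atTop (nhds ρ)

/-- `φ` is exponentially locally determined: there are `C > 0` and `δ ∈ (0,1)` such that
whenever `ξ_j = ξ'_j` for all `-m ≤ j ≤ m'`, one has `‖φ(ξ) - φ(ξ')‖ ≤ C(δ^m + δ^{m'})`. -/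
def ExpLocDet {s N : ℕ} (φ : SymbSpace s → EuclideanSpace ℝ (Fin N)) : Prop :=
  ∃ C : ℝ, 0 < C ∧ ∃ δ : ℝ, 0 < δ ∧ δ < 1 ∧
    ∀ (m m' : ℕ) (ξ ξ' : SymbSpace s),
      (∀ j : ℤ, -(m : ℤ) ≤ j → j ≤ (m' : ℤ) → ξ.1 j = ξ'.1 j) →
      ‖φ ξ - φ ξ'‖ ≤ C * (δ ^ m + δ ^ m')

lemma shift_iter_apply {s : ℕ} (ξ : SymbSpace s) (i : ℕ) (j : ℤ) :
    (shift^[i] ξ).1 j = ξ.1 (j + i) := by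
  induction i generalizing j with
  | zero => simp
  | succ n ih =>
    rw [Function.iterate_succ_apply']
    show (shift^[n] ξ).1 (j + 1) = ξ.1 (j + (n + 1 : ℕ))
    rw [ih]
    show ξ.1 (j + 1 + n) = ξ.1 (j + (n + 1 : ℕ))
    push_cast
    ring_nf

lemma periodic_sum {E : Type*} [AddCommMonoid E] (a : ℕ → E) (q : ℕ)
    (ha : ∀ i, a (i + q) = a i) (k r : ℕ) :
    ∑ i ∈ Finset.range (k * q + r), a i
      = k • (∑ i ∈ Finset.range q, a i) + ∑ i ∈ Finset.range r, a i := by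
  induction k with
  | zero => simp
  | succ k ih =>
    have h1 : (k + 1) * q + r = q + (k * q + r) := by ring
    rw [h1, Finset.sum_range_add]
    have h2 : ∀ i, a (q + i) = a i := fun i => by rw [Nat.add_comm]; exact ha i
    simp_rw [h2, ih, succ_nsmul]
    abel

lemma exists_third {s : ℕ} (hs : 3 ≤ s) (a b : Fin s) : ∃ c : Fin s, c ≠ a ∧ c ≠ b := by
  by_contra h
  push_neg at h
  have hsub : (Finset.univ : Finset (Fin s)) ⊆ {a, b} := by
    intro c _
    rcases eq_or_ne c a with h' | h'
    · simp [h']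
    · simp [h c h']
  have h1 := Finset.card_le_card hsub
  have h2 : ({a, b} : Finset (Fin s)).card ≤ 2 :=
    (Finset.card_insert_le _ _).trans (by simp)
  simp [Finset.card_univ] at h1
  omega

set_option maxHeartbeats 1000000 in
lemma periodic_hasRotVec {s N : ℕ} (φ : SymbSpace s → EuclideanSpace ℝ (Fin N))
    (R : ℝ) (hR : 0 < R) (hbdd : ∀ ξ, ‖φ ξ‖ ≤ R)
    (η : SymbSpace s) (q : ℕ) (hq : 0 < q) (hper : shift^[q] η = η) :
    HasRotVec φ η (birk φ q η) := by
  set a : ℕ → EuclideanSpace ℝ (Fin N) := fun i => φ (shift^[i] η) with ha_def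
  have ha : ∀ i, a (i + q) = a i := by
    intro i
    simp only [ha_def, Function.iterate_add_apply, hper]
  set S := ∑ i ∈ Finset.range q, a i with hS_def
  have hSnorm : ‖S‖ ≤ q * R := by
    calc ‖S‖ ≤ ∑ i ∈ Finset.range q, ‖a i‖ := norm_sum_le _ _
    _ ≤ ∑ _i ∈ Finset.range q, R := Finset.sum_le_sum fun i _ => hbdd _
    _ = q * R := by simp [mul_comm]
  have hqR : (0:ℝ) < q := by exact_mod_cast hq
  rw [HasRotVec, tendsto_iff_norm_sub_tendsto_zero]
  apply tendsto_of_tendsto_of_tendsto_of_le_of_le' (g := fun _ : ℕ => (0:ℝ))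
      (h := fun n : ℕ => 2 * q * R / n) tendsto_const_nhds
      (tendsto_const_div_atTop_nhds_zero_nat _)
      (Eventually.of_forall fun n => norm_nonneg _)
  filter_upwards [eventually_ge_atTop 1] with n hn1
  have hn : 0 < n := hn1
  have hnR : (0:ℝ) < n := by exact_mod_cast hn
  set k := n / q with hk
  set r := n % q with hr
  have hkr : k * q + r = n := by rw [hk, hr, Nat.mul_comm, Nat.div_add_mod]
  have hrq : r < q := Nat.mod_lt _ hq
  have hsum : ∑ i ∈ Finset.range n, a i = k • S + ∑ i ∈ Finset.range r, a i := by
    rw [← hkr]; exact periodic_sum a q ha k r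
  set T := ∑ i ∈ Finset.range r, a i with hT
  have hTnorm : ‖T‖ ≤ q * R := by
    calc ‖T‖ ≤ ∑ i ∈ Finset.range r, ‖a i‖ := norm_sum_le _ _
    _ ≤ ∑ _i ∈ Finset.range r, R := Finset.sum_le_sum fun i _ => hbdd _
    _ = r * R := by simp [mul_comm]
    _ ≤ q * R := by
      have : (r:ℝ) ≤ q := by exact_mod_cast hrq.le
      nlinarith
  have hbe : birk φ n η - birk φ q η
      = ((n:ℝ)⁻¹ * k - (q:ℝ)⁻¹) • S + (n:ℝ)⁻¹ • T := by
    simp only [birk]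
    rw [hsum]
    rw [smul_add, ← Nat.cast_smul_eq_nsmul ℝ k S, smul_smul, sub_smul]
    abel
  rw [hbe]
  have key : (n:ℝ)⁻¹ * k - (q:ℝ)⁻¹ = -((r:ℝ) / (n * q)) := by
    have hcast : (n:ℝ) = k * q + r := by exact_mod_cast hkr.symm
    field_simp
    nlinarith [hcast]
  calc ‖((n:ℝ)⁻¹ * k - (q:ℝ)⁻¹) • S + (n:ℝ)⁻¹ • T‖
      ≤ ‖((n:ℝ)⁻¹ * k - (q:ℝ)⁻¹) • S‖ + ‖(n:ℝ)⁻¹ • T‖ := norm_add_le _ _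
    _ = |(n:ℝ)⁻¹ * k - (q:ℝ)⁻¹| * ‖S‖ + |(n:ℝ)⁻¹| * ‖T‖ := by
        rw [norm_smul, norm_smul, Real.norm_eq_abs, Real.norm_eq_abs]
    _ ≤ ((r:ℝ) / (n * q)) * (q * R) + (n:ℝ)⁻¹ * (q * R) := by
        rw [key]
        gcongr
        · rw [abs_neg, abs_of_nonneg (by positivity)]
        · rw [abs_of_nonneg (by positivity)]
    _ ≤ 2 * q * R / n := by
        have hrle : (r:ℝ) ≤ q := by exact_mod_cast hrq.le
        have h1 : (r:ℝ) / (↑n * ↑q) * (↑q * R) + (↑n:ℝ)⁻¹ * (↑q * R)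
            = ((r:ℝ) * R + ↑q * R) / n := by field_simp
        rw [h1]
        gcongr
        have hrle : (r:ℝ) ≤ q := by exact_mod_cast hrq.le
        nlinarith

lemma exists_periodic_approx {s : ℕ} (hs : 3 ≤ s) (ξ : SymbSpace s) (p : ℕ) (hp : 2 ≤ p) :
    ∃ η : SymbSpace s, shift^[p] η = η ∧
      ∀ j : ℤ, 0 ≤ j → j ≤ (p : ℤ) - 2 → η.1 j = ξ.1 j := by
  obtain ⟨c, hc0, hc1⟩ := exists_third hs (ξ.1 ((p : ℤ) - 2)) (ξ.1 0)
  set P : ℤ := (p : ℤ) with hP_def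
  have hP : 2 ≤ P := by rw [hP_def]; exact_mod_cast hp
  have hP0 : 0 < P := by omega
  set f : ℤ → Fin s := fun i => if i % P = P - 1 then c else ξ.1 (i % P) with hf
  have hmod : ∀ i : ℤ, 0 ≤ i % P ∧ i % P < P :=
    fun i => ⟨Int.emod_nonneg i (by omega), Int.emod_lt_of_pos i hP0⟩
  have hsucc : ∀ i : ℤ, (i + 1) % P = if i % P = P - 1 then 0 else i % P + 1 := by
    intro i
    rw [Int.add_emod]
    have h1 : (1 : ℤ) % P = 1 := Int.emod_eq_of_lt (by omega) (by omega)
    rw [h1]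
    by_cases h : i % P = P - 1
    · simp [h]
    · rw [if_neg h]
      have := hmod i
      exact Int.emod_eq_of_lt (by omega) (by omega)
  have hadm : ∀ i : ℤ, f i ≠ f (i + 1) := by
    intro i
    have hm := hmod i
    by_cases h1 : i % P = P - 1
    · have h2 : (i + 1) % P = 0 := by rw [hsucc, if_pos h1]
      simp only [hf, h1, h2, if_pos rfl, if_neg (show (0:ℤ) ≠ P - 1 by omega)]
      exact hc1
    · have h2 : (i + 1) % P = i % P + 1 := by rw [hsucc, if_neg h1]
      by_cases h3 : i % P = P - 2
      · have h4 : (i + 1) % P = P - 1 := by omega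
        simp only [hf, if_neg h1, h4, if_pos rfl, h3]
        exact fun h => hc0 h.symm
      · have h4 : (i + 1) % P ≠ P - 1 := by omega
        simp only [hf, if_neg h1, if_neg h4, h2]
        exact ξ.2 (i % P)
  refine ⟨⟨f, hadm⟩, ?_, ?_⟩
  · apply Subtype.ext
    funext i
    refine (shift_iter_apply (⟨f, hadm⟩ : SymbSpace s) p i).trans ?_
    show f (i + P) = f i
    have : (i + P) % P = i % P := by
      simpa using Int.add_mul_emod_self_left (a := i) (b := P) (c := 1)
    simp only [hf, this]
  · intro j hj0 hj2
    have hjm : j % P = j := Int.emod_eq_of_lt hj0 (by omega)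
    show f j = ξ.1 j
    simp only [hf, hjm, if_neg (show j ≠ P - 1 by omega)]

lemma birk_close {s N : ℕ} (φ : SymbSpace s → EuclideanSpace ℝ (Fin N))
    (C δ : ℝ) (hC : 0 < C) (hδ0 : 0 < δ) (hδ1 : δ < 1)
    (hloc' : ∀ (m m' : ℕ) (ζ ζ' : SymbSpace s),
      (∀ j : ℤ, -(m : ℤ) ≤ j → j ≤ (m' : ℤ) → ζ.1 j = ζ'.1 j) →
      ‖φ ζ - φ ζ'‖ ≤ C * (δ ^ m + δ ^ m'))
    (R : ℝ) (hR : 0 < R) (hbdd : ∀ ζ, ‖φ ζ‖ ≤ R)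
    (ξ η : SymbSpace s) (p : ℕ) (hp : 2 ≤ p)
    (hagree : ∀ j : ℤ, 0 ≤ j → j ≤ (p : ℤ) - 2 → η.1 j = ξ.1 j) :
    ‖birk φ p ξ - birk φ p η‖ ≤ (2 * C / (1 - δ) + 2 * R) / p := by
  have hp0 : (0:ℝ) < p := by exact_mod_cast (by omega : 0 < p)
  set d : ℕ → EuclideanSpace ℝ (Fin N) :=
    fun i => φ (shift^[i] ξ) - φ (shift^[i] η) with hd
  have hdiff : birk φ p ξ - birk φ p η = (p:ℝ)⁻¹ • ∑ i ∈ Finset.range p, d i := by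
    simp only [birk, ← smul_sub, ← Finset.sum_sub_distrib, hd]
  set n1 := p - 1 with hn1
  have hpn1 : p = n1 + 1 := by omega
  have hterm : ∀ i < n1, ‖d i‖ ≤ C * (δ ^ i + δ ^ (n1 - 1 - i)) := by
    intro i hi
    apply hloc' i (n1 - 1 - i)
    intro j hj1 hj2
    have h1 : (shift^[i] ξ).1 j = ξ.1 (j + i) := shift_iter_apply _ _ _
    have h2 : (shift^[i] η).1 j = η.1 (j + i) := shift_iter_apply _ _ _
    rw [h1, h2]
    have hcast : ((n1 - 1 - i : ℕ) : ℤ) = (p:ℤ) - 2 - i := by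
      have : i ≤ n1 - 1 := by omega
      push_cast [Nat.cast_sub (by omega : 1 + i ≤ n1)]
      omega
    exact (hagree (j + i) (by omega) (by rw [hcast] at hj2; omega)).symm
  have hlast : ‖d n1‖ ≤ 2 * R := by
    calc ‖d n1‖ ≤ ‖φ (shift^[n1] ξ)‖ + ‖φ (shift^[n1] η)‖ := norm_sub_le _ _
    _ ≤ R + R := add_le_add (hbdd _) (hbdd _)
    _ = 2 * R := by ring
  have hgeom : ∑ i ∈ Finset.range n1, δ ^ i ≤ 1 / (1 - δ) := by
    rw [geom_sum_eq (by linarith : δ ≠ 1)]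
    rw [show (δ ^ n1 - 1) / (δ - 1) = (1 - δ ^ n1) / (1 - δ) by
      rw [← neg_div_neg_eq]; ring_nf]
    gcongr
    all_goals nlinarith [pow_nonneg hδ0.le n1]
  have hsum : ∑ i ∈ Finset.range p, ‖d i‖ ≤ 2 * C / (1 - δ) + 2 * R := by
    rw [hpn1, Finset.sum_range_succ]
    have h1 : ∑ i ∈ Finset.range n1, ‖d i‖
        ≤ ∑ i ∈ Finset.range n1, C * (δ ^ i + δ ^ (n1 - 1 - i)) :=
      Finset.sum_le_sum fun i hi => hterm i (Finset.mem_range.mp hi)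
    have h2 : ∑ i ∈ Finset.range n1, C * (δ ^ i + δ ^ (n1 - 1 - i))
        = C * (∑ i ∈ Finset.range n1, δ ^ i + ∑ i ∈ Finset.range n1, δ ^ (n1 - 1 - i)) := by
      rw [← Finset.sum_add_distrib, Finset.mul_sum]
    have h3 : ∑ i ∈ Finset.range n1, δ ^ (n1 - 1 - i) = ∑ i ∈ Finset.range n1, δ ^ i :=
      Finset.sum_range_reflect (fun i => δ ^ i) n1
    have h4 : C * (∑ i ∈ Finset.range n1, δ ^ i + ∑ i ∈ Finset.range n1, δ ^ (n1 - 1 - i))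
        ≤ 2 * C / (1 - δ) := by
      rw [h3]
      have : ∑ i ∈ Finset.range n1, δ ^ i + ∑ i ∈ Finset.range n1, δ ^ i
          ≤ 2 / (1 - δ) := by
        have := hgeom
        rw [show (2:ℝ) / (1 - δ) = 1 / (1-δ) + 1 / (1-δ) by ring]
        linarith
      calc C * (∑ i ∈ Finset.range n1, δ ^ i + ∑ i ∈ Finset.range n1, δ ^ i)
          ≤ C * (2 / (1 - δ)) := by gcongr
        _ = 2 * C / (1 - δ) := by ring
    linarith
  rw [hdiff]
  rw [norm_smul, Real.norm_eq_abs, abs_of_nonneg (by positivity)]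
  calc (p:ℝ)⁻¹ * ‖∑ i ∈ Finset.range p, d i‖
      ≤ (p:ℝ)⁻¹ * (∑ i ∈ Finset.range p, ‖d i‖) := by
        gcongr; exact norm_sum_le _ _
    _ ≤ (p:ℝ)⁻¹ * (2 * C / (1 - δ) + 2 * R) := by gcongr
    _ = (2 * C / (1 - δ) + 2 * R) / p := by ring

/-- if the rotation vector `ρ_φ(ξ)` exists, then for every `ε > 0` there is
a periodic sequence `η` whose rotation vector is `ε`-close to it; in particular the
rotation vectors of periodic sequences are dense in the pointwise rotation set `J_φ`. -/
theorem periodic_rotation_vectors_dense_in_pointwise (s N : ℕ) (hs : 3 ≤ s) (hN : 1 ≤ N)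
    (φ : SymbSpace s → EuclideanSpace ℝ (Fin N))
    (R : ℝ) (hR : 0 < R) (hbdd : ∀ ξ, ‖φ ξ‖ ≤ R) (hloc : ExpLocDet φ)
    (ξ : SymbSpace s) (ρ : EuclideanSpace ℝ (Fin N)) (hρ : HasRotVec φ ξ ρ)
    (ε : ℝ) (hε : 0 < ε) :
    ∃ (η : SymbSpace s) (q : ℕ), 0 < q ∧ shift^[q] η = η ∧
      ∃ ρη : EuclideanSpace ℝ (Fin N), HasRotVec φ η ρη ∧ ‖ρ - ρη‖ < ε := by
  obtain ⟨C, hC, δ, hδ0, hδ1, hloc'⟩ := hloc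
  set D : ℝ := 2 * C / (1 - δ) + 2 * R with hD_def
  have h1 : ∀ᶠ n : ℕ in atTop, ‖birk φ n ξ - ρ‖ < ε / 2 := by
    have := (tendsto_iff_norm_sub_tendsto_zero.mp hρ)
    exact this.eventually_lt_const (by linarith)
  have h2 : ∀ᶠ n : ℕ in atTop, D / n < ε / 2 :=
    (tendsto_const_div_atTop_nhds_zero_nat D).eventually_lt_const (by linarith)
  have h3 : ∀ᶠ n : ℕ in atTop, 2 ≤ n := eventually_ge_atTop 2
  obtain ⟨p, hp1, hp2, hp3⟩ := (h1.and (h2.and h3)).exists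
  obtain ⟨η, hper, hagree⟩ := exists_periodic_approx hs ξ p hp3
  have hclose : ‖birk φ p ξ - birk φ p η‖ ≤ D / p :=
    birk_close φ C δ hC hδ0 hδ1 hloc' R hR hbdd ξ η p hp3 hagree
  refine ⟨η, p, by omega, hper, birk φ p η,
    periodic_hasRotVec φ R hR hbdd η p (by omega) hper, ?_⟩
  calc ‖ρ - birk φ p η‖ = ‖(ρ - birk φ p ξ) + (birk φ p ξ - birk φ p η)‖ := by abel_nf
    _ ≤ ‖ρ - birk φ p ξ‖ + ‖birk φ p ξ - birk φ p η‖ := norm_add_le _ _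
    _ < ε / 2 + ε / 2 := by
        apply add_lt_add_of_lt_of_le
        · rw [norm_sub_rev]; exact hp1
        · exact lt_of_le_of_lt hclose hp2 |>.le
    _ = ε := by ring
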